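/- Let α be a confluent continuous partial action of a monoid M on a T1 space X such that, for each generator g ∈ G, the partial map g: X ⇀ X has finite fibres. Then the topological globalization Y is T1. -/

import Mathlib

/-- One-step reduction on words over `G` induced by the rules `R` of a monoid
presentation `⟨G|R⟩`. -/
def MStep {G : Type*} (R : List G → List G → Prop) : List G → List G → Prop :=
  fun w₁ w₂ => ∃ a l r b : List G, R l r ∧ w₁ = a ++ l ++ b ∧ w₂ = a ++ r ++ b

/-- One-step reduction on `G* × X` for a confluent partial action: either
rewrite the word via `R`, or let the last (rightmost, acting first) generator
act on the point. -/
def PStep {G X : Type*} (R : List G → List G → Prop) (act : G → X → Option X) :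
    List G × X → List G × X → Prop := fun p q =>
  (MStep R p.1 q.1 ∧ p.2 = q.2) ∨
  (∃ (w : List G) (g : G) (y : X),
    p.1 = w ++ [g] ∧ act g p.2 = some y ∧ q.1 = w ∧ q.2 = y)

/-- The globalization `Y` of a confluent partial action: the quotient of
`G* × X` by the equivalence generated by the one-step reduction `PStep`. -/
def PGlob {G X : Type*} (R : List G → List G → Prop) (act : G → X → Option X) : Type _ :=
  Quot (Relation.EqvGen (PStep R act))

/-- The class of `(w, x)` in the globalization. -/
def PGlob.mk {G X : Type*} (R : List G → List G → Prop) (act : G → X → Option X)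
    (p : List G × X) : PGlob R act :=
  Quot.mk _ p

/-- The topological globalization: the final topology with respect to all the
maps `x ↦ [w, x]`, `w` a word over `G`. -/
instance {G X : Type*} (R : List G → List G → Prop) (act : G → X → Option X)
    [t : TopologicalSpace X] : TopologicalSpace (PGlob R act) :=
  ⨆ w : List G, TopologicalSpace.coinduced (fun x : X => PGlob.mk R act (w, x)) t

section Aux

open Relation

variable {G X : Type*} {R : List G → List G → Prop} {act : G → X → Option X}

/-- Sequentially apply the partial generator actions along a list. -/
def PRun (act : G → X → Option X) : List G → X → Option X
  | [], x => some x
  | g :: l, x => (act g x).bind (PRun act l)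

lemma prun_append (l₁ l₂ : List G) (x : X) :
    PRun act (l₁ ++ l₂) x = (PRun act l₁ x).bind (PRun act l₂) := by
  induction l₁ generalizing x with
  | nil => rfl
  | cons g t ih =>
    show (act g x).bind (PRun act (t ++ l₂)) = ((act g x).bind (PRun act t)).bind (PRun act l₂)
    cases act g x with
    | none => rfl
    | some y => simp [ih]

lemma prun_fiber_finite (hfib : ∀ (g : G) (x : X), {x' : X | act g x' = some x}.Finite) :
    ∀ (l : List G) (z : X), {x | PRun act l x = some z}.Finite := by
  intro l
  induction l with
  | nil =>
    intro z
    refine (Set.finite_singleton z).subset ?_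
    intro x hx
    simp only [PRun, Option.some.injEq, Set.mem_setOf_eq] at hx
    simp [hx]
  | cons g t ih =>
    intro z
    have hsub : {x | PRun act (g :: t) x = some z} ⊆
        ⋃ y ∈ {y | PRun act t y = some z}, {x | act g x = some y} := by
      intro x hx
      simp only [PRun, Option.bind_eq_some_iff, Set.mem_setOf_eq] at hx
      obtain ⟨y, h1, h2⟩ := hx
      exact Set.mem_biUnion h2 h1
    exact ((ih z).biUnion fun y _ => hfib g y).subset hsub

lemma normal_prefix {w u s : List G} (hw : w = u ++ s) (h : ∀ v, ¬ MStep R w v) :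
    ∀ v, ¬ MStep R u v := by
  rintro v ⟨a, l, r, b, hR, hu, -⟩
  exact h (a ++ r ++ (b ++ s)) ⟨a, l, r, b ++ s, hR, by simp [hw, hu], by simp⟩

lemma reach_of_normal {w : List G} (hn : ∀ v, ¬ MStep R w v) {x : X} {t : List G × X}
    (h : ReflTransGen (PStep R act) (w, x) t) :
    ∃ u s : List G, w = u ++ s ∧ t.1 = u ∧ PRun act s.reverse x = some t.2 := by
  induction h with
  | refl => exact ⟨w, [], by simp, rfl, rfl⟩
  | @tail b c h1 h2 ih =>
    obtain ⟨u, s, hw, ht1, hr⟩ := ih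
    rcases h2 with ⟨hm, -⟩ | ⟨u', g, y, hb1, hact, hc1, hc2⟩
    · exact absurd (ht1 ▸ hm) (normal_prefix hw hn c.1)
    · have hu : u = u' ++ [g] := ht1.symm.trans hb1
      refine ⟨u', g :: s, ?_, hc1, ?_⟩
      · rw [hw, hu]; simp
      · rw [List.reverse_cons, prun_append, hr]
        show PRun act [g] b.2 = some c.2
        simp [PRun, hact, hc2]

lemma eqvGen_join {α : Type*} {r : α → α → Prop}
    (hc : ∀ p q₁ q₂, ReflTransGen r p q₁ → ReflTransGen r p q₂ →
      ∃ t, ReflTransGen r q₁ t ∧ ReflTransGen r q₂ t)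
    {a b : α} (h : Relation.EqvGen r a b) :
    ∃ t, ReflTransGen r a t ∧ ReflTransGen r b t := by
  induction h with
  | rel a b hab => exact ⟨b, ReflTransGen.single hab, ReflTransGen.refl⟩
  | refl a => exact ⟨a, ReflTransGen.refl, ReflTransGen.refl⟩
  | symm a b _ ih => obtain ⟨t, h1, h2⟩ := ih; exact ⟨t, h2, h1⟩
  | trans a b c _ _ ih1 ih2 =>
    obtain ⟨t1, ha, hb⟩ := ih1
    obtain ⟨t2, hb', hc'⟩ := ih2
    obtain ⟨t, h1, h2⟩ := hc b t1 t2 hb hb'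
    exact ⟨t, ha.trans h1, hc'.trans h2⟩

lemma eqvGen_idem {α : Type*} {r : α → α → Prop} {a b : α}
    (h : Relation.EqvGen (Relation.EqvGen r) a b) : Relation.EqvGen r a b := by
  induction h with
  | rel a b hab => exact hab
  | refl a => exact Relation.EqvGen.refl a
  | symm a b _ ih => exact ih.symm _ _
  | trans a b c _ _ ih1 ih2 => exact ih1.trans _ _ _ ih2

lemma exists_nf (hnoeth : WellFounded (fun w₁ w₂ : List G => MStep R w₂ w₁)) (w : List G) :
    ∃ w', ReflTransGen (MStep R) w w' ∧ ∀ v, ¬ MStep R w' v := by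
  induction w using hnoeth.induction with
  | _ w ih =>
    by_cases h : ∃ v, MStep R w v
    · obtain ⟨v, hv⟩ := h
      obtain ⟨w', h1, h2⟩ := ih v hv
      exact ⟨w', (ReflTransGen.single hv).trans h1, h2⟩
    · exact ⟨w, ReflTransGen.refl, fun v hv => h ⟨v, hv⟩⟩

lemma rtg_mstep_lift {w w' : List G} (h : ReflTransGen (MStep R) w w') (x : X) :
    ReflTransGen (PStep R act) (w, x) (w', x) := by
  induction h with
  | refl => exact ReflTransGen.refl
  | tail _ h2 ih => exact ih.tail (Or.inl ⟨h2, rfl⟩)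

lemma first_finite
    (hconfP : ∀ p q₁ q₂ : List G × X, ReflTransGen (PStep R act) p q₁ →
      ReflTransGen (PStep R act) p q₂ →
      ∃ t, ReflTransGen (PStep R act) q₁ t ∧ ReflTransGen (PStep R act) q₂ t)
    (hfib : ∀ (g : G) (x : X), {x' : X | act g x' = some x}.Finite)
    (p₀ : List G × X) {w : List G} (hn : ∀ v, ¬ MStep R w v) :
    {x | ReflTransGen (PStep R act) p₀ (w, x)}.Finite := by
  rcases Set.eq_empty_or_nonempty {x | ReflTransGen (PStep R act) p₀ (w, x)} with he | ⟨x₀, hx₀⟩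
  · rw [he]; exact Set.finite_empty
  · have hsub : {x | ReflTransGen (PStep R act) p₀ (w, x)} ⊆
        ⋃ k ∈ Set.Iic w.length,
          {x | ∃ z, PRun act ((w.drop k).reverse) x₀ = some z ∧
            PRun act ((w.drop k).reverse) x = some z} := by
      intro x hx
      obtain ⟨t, h1, h2⟩ := hconfP p₀ (w, x) (w, x₀) hx hx₀
      obtain ⟨u₁, s₁, hw₁, ht₁, hr₁⟩ := reach_of_normal hn h1
      obtain ⟨u₂, s₂, hw₂, ht₂, hr₂⟩ := reach_of_normal hn h2
      have hu : u₁ = u₂ := ht₁.symm.trans ht₂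
      have hs : s₂ = s₁ := by
        subst hu
        exact (List.append_cancel_left (hw₁.symm.trans hw₂)).symm
      refine Set.mem_biUnion (show u₁.length ∈ Set.Iic w.length by
        simp only [Set.mem_Iic, hw₁, List.length_append]; omega) ?_
      have hdrop : w.drop u₁.length = s₁ := by rw [hw₁, List.drop_left]
      exact ⟨t.2, by rw [hdrop, ← hs]; exact hr₂, by rw [hdrop]; exact hr₁⟩
    refine (Set.Finite.biUnion (Set.finite_Iic _) fun k _ => ?_).subset hsub
    cases hz : PRun act ((w.drop k).reverse) x₀ with
    | none =>
      refine Set.Finite.subset Set.finite_empty ?_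
      rintro x ⟨z, h1, -⟩
      cases h1
    | some z =>
      refine (prun_fiber_finite hfib ((w.drop k).reverse) z).subset ?_
      rintro x ⟨z', h1, h2⟩
      injection h1 with h1
      rw [h1]
      exact h2

lemma joinset_finite
    (hconfP : ∀ p q₁ q₂ : List G × X, ReflTransGen (PStep R act) p q₁ →
      ReflTransGen (PStep R act) p q₂ →
      ∃ t, ReflTransGen (PStep R act) q₁ t ∧ ReflTransGen (PStep R act) q₂ t)
    (hfib : ∀ (g : G) (x : X), {x' : X | act g x' = some x}.Finite)
    (p₀ : List G × X) :
    ∀ (n : ℕ) (w : List G), w.length ≤ n → (∀ v, ¬ MStep R w v) →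
      {x | ∃ t, ReflTransGen (PStep R act) (w, x) t ∧
        ReflTransGen (PStep R act) p₀ t}.Finite := by
  intro n
  induction n with
  | zero =>
    intro w hlen hn
    refine (first_finite hconfP hfib p₀ hn).subset ?_
    rintro x ⟨t, h1, h2⟩
    rcases h1.cases_head with heq | ⟨p', hstep, h1'⟩
    · have := h2; rw [← heq] at this; exact this
    · rcases hstep with ⟨hm, -⟩ | ⟨u', g, y, hb, -⟩
      · exact absurd hm (hn _)
      · have : w = [] := List.length_eq_zero_iff.mp (Nat.le_zero.mp hlen)
        rw [this] at hb
        simp at hb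
  | succ n ih =>
    intro w hlen hn
    rcases List.eq_nil_or_concat w with rfl | ⟨w₁, g, rfl⟩
    · refine (first_finite hconfP hfib p₀ hn).subset ?_
      rintro x ⟨t, h1, h2⟩
      rcases h1.cases_head with heq | ⟨p', hstep, h1'⟩
      · have := h2; rw [← heq] at this; exact this
      · rcases hstep with ⟨hm, -⟩ | ⟨u', g, y, hb, -⟩
        · exact absurd hm (hn _)
        · simp at hb
    · rw [List.concat_eq_append] at hn hlen ⊢
      have hn₁ : ∀ v, ¬ MStep R w₁ v := normal_prefix rfl hn
      have hlen₁ : w₁.length ≤ n := by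
        simp only [List.length_append, List.length_singleton] at hlen
        omega
      have hS₁ := ih w₁ hlen₁ hn₁
      refine ((first_finite hconfP hfib p₀ hn).union
        (hS₁.biUnion fun z _ => hfib g z)).subset ?_
      rintro x ⟨t, h1, h2⟩
      rcases h1.cases_head with heq | ⟨p', hstep, h1'⟩
      · left; have := h2; rw [← heq] at this; exact this
      · rcases hstep with ⟨hm, -⟩ | ⟨u', g', y, hb, hact, hc1, hc2⟩
        · exact absurd hm (hn _)
        · have hinj : w₁ = u' ∧ g = g' := by
            have hrev := congrArg List.reverse hb
            simp only [List.reverse_append, List.reverse_singleton, List.cons_append,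
              List.nil_append, List.cons.injEq] at hrev
            exact ⟨List.reverse_injective hrev.2, hrev.1⟩
          obtain ⟨rfl, rfl⟩ := hinj
          right
          refine Set.mem_biUnion (show y ∈ _ from ⟨t, ?_, h2⟩) hact
          have hp' : p' = (w₁, y) := Prod.ext hc1 hc2
          rw [← hp']
          exact h1'

end Aux

/-- If `X` is T1 and, for each generator `g ∈ G`, the partial map `g : X ⇀ X`
has finite fibres, then the topological globalization `Y` of a confluent
continuous partial action is T1. -/
theorem stmt_13 {G X : Type*} [TopologicalSpace X] [T1Space X]
    (R : List G → List G → Prop) (act : G → X → Option X)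
    (hnoeth : WellFounded (fun w₁ w₂ : List G => MStep R w₂ w₁))
    (hconfM : ∀ w s₁ s₂ : List G, Relation.ReflTransGen (MStep R) w s₁ →
      Relation.ReflTransGen (MStep R) w s₂ →
      ∃ t, Relation.ReflTransGen (MStep R) s₁ t ∧ Relation.ReflTransGen (MStep R) s₂ t)
    (hnosingle : ∀ (g : G) (r : List G), ¬ R [g] r)
    (hconfP : ∀ p q₁ q₂ : List G × X, Relation.ReflTransGen (PStep R act) p q₁ →
      Relation.ReflTransGen (PStep R act) p q₂ →
      ∃ t, Relation.ReflTransGen (PStep R act) q₁ t ∧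
        Relation.ReflTransGen (PStep R act) q₂ t)
    (hcont : ∀ g : G, ContinuousOn (fun x => (act g x).getD x) {x | (act g x).isSome})
    (hfib : ∀ (g : G) (x : X), {x' : X | act g x' = some x}.Finite) :
    T1Space (PGlob R act) := by
  refine ⟨fun q => ?_⟩
  rw [← isOpen_compl_iff]
  refine isOpen_iSup_iff.mpr fun w => ?_
  refine isOpen_coinduced.mpr ?_
  obtain ⟨p₀, rfl⟩ := Quot.exists_rep q
  rw [Set.preimage_compl]
  refine isOpen_compl_iff.mpr (Set.Finite.isClosed ?_)
  obtain ⟨w', hww', hn'⟩ := exists_nf hnoeth w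
  refine (joinset_finite hconfP hfib p₀ w'.length w' le_rfl hn').subset ?_
  intro x hx
  have he : Relation.EqvGen (PStep R act) (w, x) p₀ := eqvGen_idem (Quot.eq.mp hx)
  obtain ⟨t, h1, h2⟩ := eqvGen_join hconfP he
  obtain ⟨t', h3, h4⟩ := hconfP (w, x) t (w', x) h1 (rtg_mstep_lift hww' x)
  exact ⟨t', h4, h2.trans h3⟩
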